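/- For all policy profiles π, π' ∈ Π, the stationary distributions satisfy ‖p_π − p_{π'}‖₁ ≤ ((2^n − 1)|A||S| / (1 − e^{−1/τ})) · ‖π − π'‖_∞. -/

import Mathlib

open Matrix BigOperators

noncomputable section

variable {n : ℕ} {S : Type} [Fintype S] [DecidableEq S]
  {A : Fin n → Type} [∀ i, Fintype (A i)] [∀ i, DecidableEq (A i)]

/-- A stationary policy profile: each player `i` assigns to each state a
probability distribution on her action set `A i`. -/
def IsPolicyProfile (π : ∀ i : Fin n, S → A i → ℝ) : Prop :=
  (∀ i s a, 0 ≤ π i s a) ∧ (∀ i s, ∑ a, π i s a = 1)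

/-- Transition probabilities `ℙ[s' | s, a]`. -/
def IsTransition (T : S → (∀ i, A i) → S → ℝ) : Prop :=
  (∀ s a s', 0 ≤ T s a s') ∧ (∀ s a, ∑ s', T s a s' = 1)

/-- A probability distribution on `S` (as a row vector). -/
def IsDist (w : S → ℝ) : Prop := (∀ s, 0 ≤ w s) ∧ ∑ s, w s = 1

/-- The transition matrix induced by a policy profile:
`P_π(s'|s) = ∑_a ℙ[s'|s,a] ∏_j π_j(a_j|s)`. -/
def Pmat (T : S → (∀ i, A i) → S → ℝ) (π : ∀ i : Fin n, S → A i → ℝ) :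
    Matrix S S ℝ :=
  fun s s' => ∑ a : ∀ i, A i, T s a s' * ∏ i, π i s (a i)

/-- Sup-norm distance between two policy profiles. -/
def polDist (π π' : ∀ i : Fin n, S → A i → ℝ) : ℝ :=
  ⨆ i, ⨆ s, ⨆ a, |π i s a - π' i s a|

/-- ℓ¹-norm on ℝ^S. -/
def l1 (w : S → ℝ) : ℝ := ∑ s, |w s|

/-- The expected one-step reward vector `R_i^π`. -/
def Rvec (r : S → (∀ i, A i) → ℝ) (π : ∀ i : Fin n, S → A i → ℝ) : S → ℝ :=
  fun s => ∑ a : ∀ i, A i, (∏ j, π j s (a j)) * r s a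

/-- The long-run average value `V_i(π) = ∑_s p_π(s) R_i^π(s)`, where `p` is the
stationary distribution of `P_π`. -/
def Vval (p : S → ℝ) (R : S → ℝ) : ℝ := ∑ s, p s * R s

/-- The uniform mixing assumption with mixing time `τ`. -/
def Mixing (T : S → (∀ i, A i) → S → ℝ) (τ : ℝ) : Prop :=
  ∀ π : ∀ i : Fin n, S → A i → ℝ, IsPolicyProfile π →
    ∀ w w' : S → ℝ, IsDist w → IsDist w' →
      l1 ((w - w') ᵥ* Pmat T π) ≤ Real.exp (-(1 / τ)) * l1 (w - w')

/-- The advantage function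
`adv^π_i(s,a) = r_i(s,a) − V_i(π) + ∑_{t≥1} ((e_s − p_π) P_π^t) R_i^π`. -/
def adv (T : S → (∀ i, A i) → S → ℝ) (r : S → (∀ i, A i) → ℝ)
    (π : ∀ i : Fin n, S → A i → ℝ) (p : S → ℝ) (s : S) (a : ∀ i, A i) : ℝ :=
  r s a - Vval p (Rvec r π)
    + ∑' t : ℕ, ((Pi.single s 1 - p) ᵥ* (Pmat T π ^ (t + 1))) ⬝ᵥ (Rvec r π)

/-- The average advantage function
`\bar adv^π_i(s, a_i) = ∑_{a_{-i}} (∏_{j≠i} π_j(a_j|s)) adv^π_i(s,(a_i,a_{-i}))`. -/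
def avgAdv (T : S → (∀ i, A i) → S → ℝ) (r : S → (∀ i, A i) → ℝ)
    (π : ∀ i : Fin n, S → A i → ℝ) (p : S → ℝ) (i : Fin n) (s : S) (ai : A i) : ℝ :=
  ∑ a : ∀ j, A j,
    if a i = ai then (∏ j ∈ Finset.univ.erase i, π j s (a j)) * adv T r π p s a
    else 0

lemma abs_prod_sub_prod_le' {ι : Type*} [DecidableEq ι] (t : Finset ι) (f g : ι → ℝ)
    (hf0 : ∀ i, 0 ≤ f i) (hf1 : ∀ i, f i ≤ 1) (hg0 : ∀ i, 0 ≤ g i) (hg1 : ∀ i, g i ≤ 1) :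
    |∏ i ∈ t, f i - ∏ i ∈ t, g i| ≤ ∑ i ∈ t, |f i - g i| := by
  induction t using Finset.induction_on with
  | empty => simp
  | @insert a s ha ih =>
    rw [Finset.prod_insert ha, Finset.prod_insert ha, Finset.sum_insert ha]
    have hpf : 0 ≤ ∏ i ∈ s, f i := Finset.prod_nonneg fun i _ => hf0 i
    have hpf1 : ∏ i ∈ s, f i ≤ 1 := Finset.prod_le_one (fun i _ => hf0 i) fun i _ => hf1 i
    have h1 : f a * ∏ i ∈ s, f i - g a * ∏ i ∈ s, g i
        = (f a - g a) * ∏ i ∈ s, f i + g a * (∏ i ∈ s, f i - ∏ i ∈ s, g i) := by ring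
    rw [h1]
    calc |(f a - g a) * ∏ i ∈ s, f i + g a * (∏ i ∈ s, f i - ∏ i ∈ s, g i)|
        ≤ |(f a - g a) * ∏ i ∈ s, f i| + |g a * (∏ i ∈ s, f i - ∏ i ∈ s, g i)| := abs_add_le _ _
      _ = |f a - g a| * |∏ i ∈ s, f i| + |g a| * |∏ i ∈ s, f i - ∏ i ∈ s, g i| := by
          rw [abs_mul, abs_mul]
      _ ≤ |f a - g a| * 1 + 1 * ∑ i ∈ s, |f i - g i| := by
          gcongr
          · rw [abs_of_nonneg hpf]; exact hpf1
          · rw [abs_of_nonneg (hg0 a)]; exact hg1 a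
      _ = |f a - g a| + ∑ i ∈ s, |f i - g i| := by ring

/-- Lipschitz continuity of the stationary distribution in the policy profile. -/
theorem stationary_dist_lipschitz
    (T : S → (∀ i, A i) → S → ℝ) (hT : IsTransition T)
    (τ : ℝ) (hτ : 0 < τ) (hmix : Mixing T τ)
    (π π' : ∀ i : Fin n, S → A i → ℝ)
    (hπ : IsPolicyProfile π) (hπ' : IsPolicyProfile π')
    (p p' : S → ℝ) (hp : IsDist p) (hp' : IsDist p')
    (hstat : p ᵥ* Pmat T π = p) (hstat' : p' ᵥ* Pmat T π' = p') :
    l1 (p - p') ≤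
      ((2 : ℝ) ^ n - 1) * (Fintype.card (∀ i, A i) : ℝ) * (Fintype.card S : ℝ) / (1 - Real.exp (-(1 / τ))) * polDist π π' := by
  classical
  -- S is nonempty, otherwise hp.2 is absurd
  rcases isEmpty_or_nonempty S with hS | hS
  · exact absurd hp.2 (by simp)
  -- each A i is nonempty
  have hA : ∀ i, Nonempty (A i) := by
    intro i
    by_contra h
    rw [not_nonempty_iff] at h
    have := hπ.2 i (Classical.arbitrary S)
    simp at this
  set q : ℝ := Real.exp (-(1 / τ)) with hqdef
  have hq0 : 0 < q := Real.exp_pos _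
  have hq1 : q < 1 := by
    rw [hqdef]
    apply Real.exp_lt_one_iff.mpr
    simp [one_div]
    positivity
  set d : ℝ := polDist π π' with hddef
  have hd0 : 0 ≤ d := by
    apply Real.iSup_nonneg; intro i
    apply Real.iSup_nonneg; intro s
    apply Real.iSup_nonneg; intro a
    exact abs_nonneg _
  have hbound : ∀ i s a, |π i s a - π' i s a| ≤ d := by
    intro i s a
    calc |π i s a - π' i s a|
        ≤ ⨆ a, |π i s a - π' i s a| :=
          le_ciSup (f := fun a => |π i s a - π' i s a|) (Finite.bddAbove_range _) a
      _ ≤ ⨆ s, ⨆ a, |π i s a - π' i s a| :=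
          le_ciSup (f := fun s => ⨆ a, |π i s a - π' i s a|) (Finite.bddAbove_range _) s
      _ ≤ d := by
          rw [hddef, polDist]
          exact le_ciSup (f := fun i => ⨆ s, ⨆ a, |π i s a - π' i s a|)
            (Finite.bddAbove_range _) i
  -- product difference bound
  have habs : ∀ s (a : ∀ i, A i),
      |∏ i, π i s (a i) - ∏ i, π' i s (a i)| ≤ (n : ℝ) * d := by
    intro s a
    have hle1 : ∀ (σ : ∀ i : Fin n, S → A i → ℝ), IsPolicyProfile σ →
        ∀ i, σ i s (a i) ≤ 1 := by
      intro σ hσ i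
      have := hσ.2 i s
      calc σ i s (a i) ≤ ∑ b, σ i s b :=
            Finset.single_le_sum (fun b _ => hσ.1 i s b) (Finset.mem_univ _)
        _ = 1 := this
    calc |∏ i, π i s (a i) - ∏ i, π' i s (a i)|
        ≤ ∑ i, |π i s (a i) - π' i s (a i)| :=
          abs_prod_sub_prod_le' Finset.univ _ _ (fun i => hπ.1 i s (a i))
            (fun i => hle1 π hπ i) (fun i => hπ'.1 i s (a i)) (fun i => hle1 π' hπ' i)
      _ ≤ ∑ _i : Fin n, d := Finset.sum_le_sum fun i _ => hbound i s (a i)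
      _ = (n : ℝ) * d := by simp [mul_comm]
  set B : ℝ := (Fintype.card (∀ i, A i) : ℝ) * ((n : ℝ) * d) with hBdef
  -- row bound for difference matrix
  have hrow : ∀ s, ∑ s', |Pmat T π s s' - Pmat T π' s s'| ≤ B := by
    intro s
    have h1 : ∀ s', |Pmat T π s s' - Pmat T π' s s'|
        ≤ ∑ a : ∀ i, A i, T s a s' * |∏ i, π i s (a i) - ∏ i, π' i s (a i)| := by
      intro s'
      rw [Pmat, Pmat, ← Finset.sum_sub_distrib]
      calc |∑ a : ∀ i, A i, (T s a s' * ∏ i, π i s (a i) - T s a s' * ∏ i, π' i s (a i))|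
          ≤ ∑ a : ∀ i, A i, |T s a s' * ∏ i, π i s (a i) - T s a s' * ∏ i, π' i s (a i)| :=
            Finset.abs_sum_le_sum_abs _ _
        _ = ∑ a : ∀ i, A i, T s a s' * |∏ i, π i s (a i) - ∏ i, π' i s (a i)| := by
            apply Finset.sum_congr rfl
            intro a _
            rw [← mul_sub, abs_mul, abs_of_nonneg (hT.1 s a s')]
    calc ∑ s', |Pmat T π s s' - Pmat T π' s s'|
        ≤ ∑ s', ∑ a : ∀ i, A i, T s a s' * |∏ i, π i s (a i) - ∏ i, π' i s (a i)| :=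
          Finset.sum_le_sum fun s' _ => h1 s'
      _ = ∑ a : ∀ i, A i, (∑ s', T s a s') * |∏ i, π i s (a i) - ∏ i, π' i s (a i)| := by
          rw [Finset.sum_comm]
          simp [Finset.sum_mul]
      _ = ∑ a : ∀ i, A i, |∏ i, π i s (a i) - ∏ i, π' i s (a i)| := by
          simp [hT.2 s]
      _ ≤ ∑ _a : ∀ i, A i, (n : ℝ) * d := Finset.sum_le_sum fun a _ => habs s a
      _ = B := by simp [hBdef, mul_comm]
  -- l1 bound for p' times difference matrix
  have hB : l1 (p' ᵥ* (Pmat T π - Pmat T π')) ≤ B := by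
    have hM : ∀ s', |(p' ᵥ* (Pmat T π - Pmat T π')) s'|
        ≤ ∑ s, p' s * |Pmat T π s s' - Pmat T π' s s'| := by
      intro s'
      simp only [Matrix.vecMul, dotProduct, Matrix.sub_apply]
      calc |∑ s, p' s * (Pmat T π s s' - Pmat T π' s s')|
          ≤ ∑ s, |p' s * (Pmat T π s s' - Pmat T π' s s')| := Finset.abs_sum_le_sum_abs _ _
        _ = ∑ s, p' s * |Pmat T π s s' - Pmat T π' s s'| := by
            apply Finset.sum_congr rfl
            intro s _
            rw [abs_mul, abs_of_nonneg (hp'.1 s)]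
    calc l1 (p' ᵥ* (Pmat T π - Pmat T π'))
        ≤ ∑ s', ∑ s, p' s * |Pmat T π s s' - Pmat T π' s s'| :=
          Finset.sum_le_sum fun s' _ => hM s'
      _ = ∑ s, p' s * ∑ s', |Pmat T π s s' - Pmat T π' s s'| := by
          rw [Finset.sum_comm]
          simp [Finset.mul_sum]
      _ ≤ ∑ s, p' s * B := by
          apply Finset.sum_le_sum
          intro s _
          exact mul_le_mul_of_nonneg_left (hrow s) (hp'.1 s)
      _ = B := by rw [← Finset.sum_mul, hp'.2, one_mul]
  -- decomposition
  have hdec : p - p' = (p - p') ᵥ* Pmat T π + p' ᵥ* (Pmat T π - Pmat T π') := by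
    rw [Matrix.sub_vecMul, Matrix.vecMul_sub, hstat, hstat']
    abel
  have htri : l1 (p - p') ≤ l1 ((p - p') ᵥ* Pmat T π) + l1 (p' ᵥ* (Pmat T π - Pmat T π')) := by
    simp only [l1]
    rw [← Finset.sum_add_distrib]
    apply Finset.sum_le_sum
    intro s _
    conv_lhs => rw [hdec]
    exact abs_add_le _ _
  have hkey : l1 (p - p') ≤ q * l1 (p - p') + B := by
    have := hmix π hπ p p' hp hp'
    linarith [htri, hB]
  -- conclude
  have hq1' : 0 < 1 - q := by linarith
  have hL : l1 (p - p') ≤ B / (1 - q) := by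
    rw [le_div_iff₀ hq1']
    nlinarith [hkey]
  have hn : (n : ℝ) ≤ (2 : ℝ) ^ n - 1 := by
    have := Nat.lt_two_pow_self (n := n)
    have : (n : ℝ) + 1 ≤ (2 : ℝ) ^ n := by exact_mod_cast this
    linarith
  have hS1 : (1 : ℝ) ≤ (Fintype.card S : ℝ) := by
    exact_mod_cast Fintype.card_pos
  have hA0 : (0 : ℝ) ≤ (Fintype.card (∀ i, A i) : ℝ) := by positivity
  have hCK : B ≤ ((2 : ℝ) ^ n - 1) * (Fintype.card (∀ i, A i) : ℝ) * (Fintype.card S : ℝ) * d := by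
    have e1 : (0 : ℝ) ≤ (2 : ℝ) ^ n - 1 := le_trans (Nat.cast_nonneg n) hn
    rw [hBdef]
    calc (Fintype.card (∀ i, A i) : ℝ) * ((n : ℝ) * d)
        ≤ (Fintype.card (∀ i, A i) : ℝ) * (((2 : ℝ) ^ n - 1) * d) :=
          mul_le_mul_of_nonneg_left (mul_le_mul_of_nonneg_right hn hd0) hA0
      _ = (((2 : ℝ) ^ n - 1) * (Fintype.card (∀ i, A i) : ℝ) * d) * 1 := by ring
      _ ≤ (((2 : ℝ) ^ n - 1) * (Fintype.card (∀ i, A i) : ℝ) * d) * (Fintype.card S : ℝ) :=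
          mul_le_mul_of_nonneg_left hS1 (mul_nonneg (mul_nonneg e1 hA0) hd0)
      _ = ((2 : ℝ) ^ n - 1) * (Fintype.card (∀ i, A i) : ℝ) * (Fintype.card S : ℝ) * d := by
          ring
  calc l1 (p - p') ≤ B / (1 - q) := hL
    _ ≤ ((2 : ℝ) ^ n - 1) * (Fintype.card (∀ i, A i) : ℝ) * (Fintype.card S : ℝ) * d / (1 - q) := by
        gcongr
    _ = ((2 : ℝ) ^ n - 1) * (Fintype.card (∀ i, A i) : ℝ) * (Fintype.card S : ℝ) / (1 - q) * d := by
        ring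


end
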